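/- Let f : [0,1] → [-1,1] be a non-constant continuous map with f(0) = 0. Then f has at least one contour point: there exists a departure α of f such that for every departure x of f with x > α, there exists a departure y of f of orientation opposite to that of α with α < y ≤ x. -/
import Mathlib


open Set

/-- A positive radial departure of `f`. -/
def PosRD (f : ℝ → ℝ) (x₁ x₂ : ℝ) : Prop :=
  -1 ≤ x₁ ∧ x₁ < 0 ∧ 0 < x₂ ∧ x₂ ≤ 1 ∧ f '' Ioo x₁ x₂ = Ioo (f x₁) (f x₂)

/-- A negative radial departure of `f`. -/
def NegRD (f : ℝ → ℝ) (x₁ x₂ : ℝ) : Prop :=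
  -1 ≤ x₁ ∧ x₁ < 0 ∧ 0 < x₂ ∧ x₂ ≤ 1 ∧ f '' Ioo x₁ x₂ = Ioo (f x₂) (f x₁)

/-- A radial departure of `f` (of either orientation). -/
def RadialDeparture (f : ℝ → ℝ) (x₁ x₂ : ℝ) : Prop := PosRD f x₁ x₂ ∨ NegRD f x₁ x₂

/-- A (right) departure of `g` (viewed as a map on `[0,1]`). -/
def Departure (g : ℝ → ℝ) (x : ℝ) : Prop := 0 < x ∧ x ≤ 1 ∧ g x ∉ g '' Ico 0 x

/-- A left departure of `g` (viewed as a map on `[-1,0]`). -/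
def LeftDeparture (g : ℝ → ℝ) (x : ℝ) : Prop := -1 ≤ x ∧ x < 0 ∧ g x ∉ g '' Ioc x 0

/-- A (right) contour point of `g`: a departure `α` such that every departure past `α`
is preceded (within `(α, x]`) by a departure of orientation opposite to that of `α`. -/
def ContourPoint (g : ℝ → ℝ) (α : ℝ) : Prop :=
  Departure g α ∧
    ∀ x, Departure g x → α < x → ∃ y, Departure g y ∧ α < y ∧ y ≤ x ∧ g α * g y < 0

/-- `[ym, yp]` is a liftable range for `t`. -/
def LiftableRange (t : ℝ → ℝ) (ym yp : ℝ) : Prop :=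
  -1 ≤ ym ∧ ym ≤ 0 ∧ 0 ≤ yp ∧ yp ≤ 1 ∧
  t '' Icc ym 0 ⊆ t '' Icc 0 1 ∧
  ¬ ∃ y₁ y₂, RadialDeparture t y₁ y₂ ∧ ym ≤ y₁ ∧ yp < y₂

/-- `f` is linear (affine) on the interval `[a,b]`. -/
def LinearOn (f : ℝ → ℝ) (a b : ℝ) : Prop :=
  ∀ x ∈ Icc a b, (b - a) * f x = (b - x) * f a + (x - a) * f b

/-- `f` is piecewise-linear on `[-1,1]`. -/
def PiecewiseLinear (f : ℝ → ℝ) : Prop :=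
  ∃ n : ℕ, ∃ c : ℕ → ℝ, c 0 = -1 ∧ c n = 1 ∧ (∀ i < n, c i < c (i + 1)) ∧
    ∀ i < n, LinearOn f (c i) (c (i + 1))

/-- `t` is the contour factor of `g` (for maps on `[0,1]`): the contour points of `g`
are `0 = α₀ < α₁ < ⋯ < α_n`, `t (i/n) = g (α i)`, and `t` is linear in between. -/
def IsContourFactor (g t : ℝ → ℝ) : Prop :=
  ∃ n : ℕ, 0 < n ∧ ∃ α : ℕ → ℝ, α 0 = 0 ∧ (∀ i < n, α i < α (i + 1)) ∧
    (∀ x, ContourPoint g x ↔ ∃ i, 1 ≤ i ∧ i ≤ n ∧ x = α i) ∧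
    (∀ i ≤ n, t ((i : ℝ) / (n : ℝ)) = g (α i)) ∧
    (∀ i < n, LinearOn t ((i : ℝ) / (n : ℝ)) (((i : ℝ) + 1) / (n : ℝ)))

/-- `t` is the radial contour factor of `f`: its restriction to `[0,1]` is the contour
factor of `f|[0,1]`, and `t|[-1,0] ∘ r` is the contour factor of `f|[-1,0] ∘ r`,
where `r x = -x`. -/
def IsRadialContourFactor (f t : ℝ → ℝ) : Prop :=
  IsContourFactor f t ∧ IsContourFactor (fun x => f (-x)) (fun x => t (-x))

/-- `f` is non-constant on each of `[0,1]` and `[-1,0]`. -/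
def NonConstSides (f : ℝ → ℝ) : Prop :=
  (∃ a ∈ Icc (0:ℝ) 1, ∃ b ∈ Icc (0:ℝ) 1, f a ≠ f b) ∧
  (∃ a ∈ Icc (-1:ℝ) 0, ∃ b ∈ Icc (-1:ℝ) 0, f a ≠ f b)


lemma dep_neg {f : ℝ → ℝ} {x : ℝ} : Departure (fun y => -f y) x ↔ Departure f x := by
  unfold Departure
  constructor <;> rintro ⟨h1, h2, h3⟩ <;> refine ⟨h1, h2, fun hmem => h3 ?_⟩
  · obtain ⟨u, hu, hfu⟩ := hmem
    exact ⟨u, hu, by simp [hfu]⟩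
  · obtain ⟨u, hu, hfu⟩ := hmem
    exact ⟨u, hu, by simpa using congrArg Neg.neg hfu⟩

lemma exists_contour_of_pos (f : ℝ → ℝ) (hf : Continuous f) (hf0 : f 0 = 0)
    (hpos : ∃ x ∈ Icc (0:ℝ) 1, 0 < f x) : ∃ α, ContourPoint f α := by
  obtain ⟨z, hz, hzmax⟩ := isCompact_Icc.exists_isMaxOn
    (Set.nonempty_Icc.2 (by norm_num : (0:ℝ) ≤ 1)) hf.continuousOn
  have hMpos : 0 < f z := by
    obtain ⟨x, hx, hfx⟩ := hpos
    exact lt_of_lt_of_le hfx (hzmax hx)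
  set T : Set ℝ := Icc (0:ℝ) 1 ∩ f ⁻¹' {f z} with hT
  have hTne : T.Nonempty := ⟨z, hz, rfl⟩
  have hTc : IsClosed T := isClosed_Icc.inter (isClosed_singleton.preimage hf)
  have hbdd : BddBelow T := ⟨0, fun x hx => hx.1.1⟩
  set α := sInf T with hα
  have hαT : α ∈ T := hTc.csInf_mem hTne hbdd
  have hαval : f α = f z := hαT.2
  have hα1 : α ≤ 1 := hαT.1.2
  have hα0 : 0 < α := by
    rcases lt_or_eq_of_le hαT.1.1 with h | h
    · exact h
    · exact absurd (h ▸ hαval) (by rw [hf0]; exact ne_of_lt hMpos)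
  have hdep : Departure f α := by
    refine ⟨hα0, hα1, fun hmem => ?_⟩
    obtain ⟨u, hu, hfu⟩ := hmem
    have huT : u ∈ T := ⟨⟨hu.1, hu.2.le.trans hα1⟩, by rw [Set.mem_preimage, hfu, hαval]; rfl⟩
    exact absurd (csInf_le hbdd huT) (not_le.2 hu.2)
  refine ⟨α, hdep, fun x hx hαx => ?_⟩
  have hx1 : x ≤ 1 := hx.2.1
  have hfxne0 : f x ≠ 0 := fun h =>
    hx.2.2 ⟨0, ⟨le_refl 0, hx.1⟩, by rw [hf0, h]⟩
  have hfxneM : f x ≠ f z := fun h =>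
    hx.2.2 ⟨α, ⟨hα0.le, hαx⟩, by rw [hαval, h]⟩
  have hfxneg : f x < 0 := by
    by_contra hge
    push_neg at hge
    have hlt : f x < f z := lt_of_le_of_ne (hzmax ⟨hx.1.le, hx1⟩) hfxneM
    have h0lt : 0 < f x := lt_of_le_of_ne hge (Ne.symm hfxne0)
    have := intermediate_value_Icc hα0.le (hf.continuousOn (s := Icc 0 α))
    have hmem : f x ∈ Icc (f 0) (f α) := by
      rw [hf0, hαval]; exact ⟨h0lt.le, hlt.le⟩
    obtain ⟨c, hc, hfc⟩ := this hmem
    exact hx.2.2 ⟨c, ⟨hc.1, lt_of_le_of_lt hc.2 hαx⟩, hfc⟩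
  exact ⟨x, hx, hαx, le_refl x, by rw [hαval]; exact mul_neg_of_pos_of_neg hMpos hfxneg⟩

theorem stmt5 (f : ℝ → ℝ) (hf : Continuous f)
    (hmap : MapsTo f (Icc (0:ℝ) 1) (Icc (-1:ℝ) 1)) (hf0 : f 0 = 0)
    (hnc : ∃ a ∈ Icc (0:ℝ) 1, ∃ b ∈ Icc (0:ℝ) 1, f a ≠ f b) :
    ∃ α, ContourPoint f α := by
  by_cases hpos : ∃ x ∈ Icc (0:ℝ) 1, 0 < f x
  · exact exists_contour_of_pos f hf hf0 hpos
  · push_neg at hpos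
    have hneg : ∃ x ∈ Icc (0:ℝ) 1, 0 < -f x := by
      obtain ⟨a, ha, b, hb, hab⟩ := hnc
      rcases eq_or_ne (f a) 0 with h | h
      · exact ⟨b, hb, by
          have := hpos b hb
          have : f b < 0 := lt_of_le_of_ne this (fun hh => hab (h.trans hh.symm))
          linarith⟩
      · exact ⟨a, ha, by
          have := hpos a ha
          have : f a < 0 := lt_of_le_of_ne this h
          linarith⟩
    obtain ⟨α, hdep, hctr⟩ := exists_contour_of_pos (fun y => -f y)
      (hf.neg) (by simp [hf0]) hneg
    refine ⟨α, dep_neg.1 hdep, fun x hx hαx => ?_⟩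
    obtain ⟨y, hy, h1, h2, h3⟩ := hctr x (dep_neg.2 hx) hαx
    exact ⟨y, dep_neg.1 hy, h1, h2, by simpa using h3⟩
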